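/- Let t, s, k be positive integers with t dividing k and s ≥ (k/t)·2^t. Let c : Fin t → ZMod s → Bool be a coloring in which every row is dominated by red, i.e., |{y ∈ ZMod s : c i y = true}| ≥ s/2 for every i. Then there exists a shift sequence σ : Fin t → ZMod s such that the number of columns y ∈ ZMod s with c i (y + σ i) = true for all i ∈ Fin t is at least k/t. -/

import Mathlib

/-- If `t ∣ k`, `s ≥ (k/t) * 2^t` and every row of the coloring `c` of the `t × s` matrix is
dominated by red (`true`), then some shift sequence `σ` yields at least `k/t` red columns. -/
theorem exists_good_shift_sequence (t s k : ℕ) (ht : 0 < t) (hs : 0 < s) (hk : 0 < k)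
    (htk : t ∣ k) (hst : (k : ℝ) / t * 2 ^ t ≤ (s : ℝ))
    (c : Fin t → ZMod s → Bool)
    (hdom : ∀ i, (s : ℝ) / 2 ≤ ({y : ZMod s | c i y = true}.ncard : ℝ)) :
    ∃ σ : Fin t → ZMod s,
      (k : ℝ) / t ≤ ({y : ZMod s | ∀ i, c i (y + σ i) = true}.ncard : ℝ) := by
  haveI : NeZero s := ⟨hs.ne'⟩
  classical
  set r : Fin t → ℕ := fun i => (Finset.univ.filter fun z => c i z = true).card with hr
  have hrdom : ∀ i, (s : ℝ) / 2 ≤ (r i : ℝ) := by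
    intro i
    have : {y : ZMod s | c i y = true} = ↑(Finset.univ.filter fun z => c i z = true) := by
      ext z; simp
    have h := hdom i
    rwa [this, Set.ncard_coe_finset] at h
  set F : (Fin t → ZMod s) → ℕ :=
    fun σ => (Finset.univ.filter fun y => ∀ i, c i (y + σ i) = true).card with hF
  -- key counting identity
  have hcount : ∀ (y : ZMod s) (i : Fin t),
      (Finset.univ.filter fun x : ZMod s => c i (y + x) = true).card = r i := by
    intro y i
    apply Finset.card_bij' (fun x _ => y + x) (fun z _ => z - y)
    · intro x hx; simpa using (Finset.mem_filter.mp hx).2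
    · intro z hz; simp only [Finset.mem_filter, Finset.mem_univ, true_and]
      have : y + (z - y) = z := by ring
      rw [this]; simpa using (Finset.mem_filter.mp hz).2
    · intro x _; ring
    · intro z _; ring
  have hsum : ∑ σ : Fin t → ZMod s, F σ = s * ∏ i, r i := by
    have h1 : ∀ σ, F σ = ∑ y : ZMod s, if (∀ i, c i (y + σ i) = true) then 1 else 0 := by
      intro σ; simp only [hF, Finset.card_filter]
    calc ∑ σ : Fin t → ZMod s, F σ
        = ∑ σ : Fin t → ZMod s, ∑ y : ZMod s, if (∀ i, c i (y + σ i) = true) then 1 else 0 := by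
          simp_rw [h1]
      _ = ∑ y : ZMod s, ∑ σ : Fin t → ZMod s, if (∀ i, c i (y + σ i) = true) then 1 else 0 :=
          Finset.sum_comm
      _ = ∑ y : ZMod s, (Finset.univ.filter fun σ : Fin t → ZMod s =>
            ∀ i, c i (y + σ i) = true).card := by
          simp_rw [Finset.card_filter]
      _ = ∑ y : ZMod s, ∏ i, r i := by
          refine Finset.sum_congr rfl fun y _ => ?_
          have : (Finset.univ.filter fun σ : Fin t → ZMod s => ∀ i, c i (y + σ i) = true)
              = Fintype.piFinset (fun i => Finset.univ.filter fun x => c i (y + x) = true) := by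
            ext σ; simp [Fintype.mem_piFinset]
          rw [this, Fintype.card_piFinset]
          exact Finset.prod_congr rfl fun i _ => hcount y i
      _ = s * ∏ i, r i := by simp [ZMod.card, mul_comm]
  -- real-valued estimate on the sum
  have hN : (Fintype.card (Fin t → ZMod s) : ℝ) = (s : ℝ) ^ t := by
    simp [ZMod.card]
  have hspos : (0 : ℝ) < s := by exact_mod_cast hs
  have h2pos : (0 : ℝ) < 2 ^ t := by positivity
  have hktnn : (0 : ℝ) ≤ (k : ℝ) / t := by positivity
  have hsumR : ((s : ℝ) ^ t) * ((k : ℝ) / t) ≤ ∑ σ : Fin t → ZMod s, (F σ : ℝ) := by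
    have hcast : (∑ σ : Fin t → ZMod s, (F σ : ℝ)) = (s : ℝ) * ∏ i, (r i : ℝ) := by
      rw [← Nat.cast_sum, hsum]; push_cast; ring
    rw [hcast]
    have hprod : ((s : ℝ) / 2) ^ t ≤ ∏ i, (r i : ℝ) := by
      calc ((s : ℝ) / 2) ^ t = ∏ _i : Fin t, (s : ℝ) / 2 := by
            simp [div_pow]
        _ ≤ ∏ i, (r i : ℝ) := by
            apply Finset.prod_le_prod
            · intro i _; positivity
            · intro i _; exact hrdom i
    calc ((s : ℝ) ^ t) * ((k : ℝ) / t)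
        = ((k : ℝ) / t * 2 ^ t) * ((s : ℝ) / 2) ^ t := by
          rw [div_pow]; field_simp
      _ ≤ (s : ℝ) * ((s : ℝ) / 2) ^ t := by
          apply mul_le_mul_of_nonneg_right hst; positivity
      _ ≤ (s : ℝ) * ∏ i, (r i : ℝ) := by
          apply mul_le_mul_of_nonneg_left hprod hspos.le
  -- pigeonhole
  have hne : (Finset.univ : Finset (Fin t → ZMod s)).Nonempty := Finset.univ_nonempty
  obtain ⟨σ, _, hσ⟩ := Finset.exists_le_of_sum_le hne (by
    calc ∑ _σ : Fin t → ZMod s, ((k : ℝ) / t)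
        = (Fintype.card (Fin t → ZMod s) : ℝ) * ((k : ℝ) / t) := by
          simp [Finset.sum_const, nsmul_eq_mul]
      _ = ((s : ℝ) ^ t) * ((k : ℝ) / t) := by rw [hN]
      _ ≤ ∑ σ : Fin t → ZMod s, (F σ : ℝ) := hsumR)
  refine ⟨σ, ?_⟩
  have : {y : ZMod s | ∀ i, c i (y + σ i) = true}
      = ↑(Finset.univ.filter fun y => ∀ i, c i (y + σ i) = true) := by
    ext y; simp
  rw [this, Set.ncard_coe_finset]
  exact hσ
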